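/- arXiv:2006.00661 — 3 statements merged into one kernel-verified Lean document; each statement's English description precedes it below -/
import Mathlib

section
/- (Approximate greedy on a k-system.) Let f : 2^N → ℝ be non-negative, monotone, and submodular, let (N, I) be a k-system, and suppose the greedy procedure produces S = {e₁,…,e_m} ∈ I (in this order, stopping when no element can be added) such that at each step i and every element e with S_{i−1} ∪ {e} ∈ I one has Δf(e | S_{i−1}) ≤ Δf(eᵢ | S_{i−1}) + 2βσᵢ for some nonnegative error terms σᵢ. Then for every feasible set C ∈ I: f(S) + (2k/(k+1))·β·Σᵢ σᵢ ≥ f(S ∪ C)/(k+1). -/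
def Submodular {α : Type*} [DecidableEq α] (f : Finset α → ℝ) : Prop :=
  ∀ A B : Finset α, A ⊆ B → ∀ e ∉ B,
    f (insert e B) - f B ≤ f (insert e A) - f A

def MaximalIn {α : Type*} [DecidableEq α] (I : Finset α → Prop)
    (S A : Finset α) : Prop :=
  A ⊆ S ∧ I A ∧ ∀ e ∈ S, e ∉ A → ¬ I (insert e A)

def IsKSystem {α : Type*} [DecidableEq α] (k : ℕ) (I : Finset α → Prop) : Prop :=
  I ∅ ∧ (∀ A B : Finset α, A ⊆ B → I B → I A) ∧
  (∀ S A B : Finset α, MaximalIn I S A → MaximalIn I S B → A.card ≤ k * B.card)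

lemma stmt7_extend {α : Type*} [DecidableEq α] (I : Finset α → Prop) :
    ∀ (n : ℕ) (U A : Finset α), (U \ A).card ≤ n → A ⊆ U → I A →
      ∃ B, A ⊆ B ∧ MaximalIn I U B := by
  intro n
  induction n with
  | zero =>
    intro U A hcard hAU hIA
    refine ⟨A, subset_rfl, hAU, hIA, ?_⟩
    intro x hxU hxA
    exfalso
    have hx : x ∈ U \ A := Finset.mem_sdiff.mpr ⟨hxU, hxA⟩
    have : 0 < (U \ A).card := Finset.card_pos.mpr ⟨x, hx⟩
    omega
  | succ n ih =>
    intro U A hcard hAU hIA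
    by_cases hmax : ∀ x ∈ U, x ∉ A → ¬ I (insert x A)
    · exact ⟨A, subset_rfl, hAU, hIA, hmax⟩
    · push_neg at hmax
      obtain ⟨x, hxU, hxA, hIx⟩ := hmax
      have hxd : x ∈ U \ A := Finset.mem_sdiff.mpr ⟨hxU, hxA⟩
      have h1 : (U \ insert x A).card ≤ n := by
        rw [Finset.sdiff_insert]
        have := Finset.card_erase_of_mem hxd
        omega
      obtain ⟨B, hB1, hB2⟩ := ih U (insert x A) h1 (Finset.insert_subset hxU hAU) hIx
      exact ⟨B, (Finset.subset_insert x A).trans hB1, hB2⟩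

lemma stmt7_marg {α : Type*} [DecidableEq α] (f : Finset α → ℝ) (hsub : Submodular f) :
    ∀ (T R : Finset α), f (R ∪ T) ≤ f R + ∑ x ∈ T \ R, (f (insert x R) - f R) := by
  intro T
  induction T using Finset.induction_on with
  | empty => simp
  | @insert a T ha ih =>
    intro R
    by_cases haR : a ∈ R
    · have h1 : R ∪ insert a T = R ∪ T := by
        rw [Finset.union_insert, Finset.insert_eq_self.mpr (Finset.mem_union_left T haR)]
      have h2 : insert a T \ R = T \ R := Finset.insert_sdiff_of_mem T haR
      rw [h1, h2]; exact ih R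
    · have h1 : R ∪ insert a T = insert a (R ∪ T) := Finset.union_insert a R T
      have h2 : insert a T \ R = insert a (T \ R) := Finset.insert_sdiff_of_notMem T haR
      have ha' : a ∉ T \ R := fun h => ha (Finset.mem_sdiff.mp h).1
      have haRT : a ∉ R ∪ T := by simp [haR, ha]
      have hs := hsub R (R ∪ T) Finset.subset_union_left a haRT
      rw [h1, h2, Finset.sum_insert ha']
      have := ih R
      linarith

lemma stmt7_sched {α : Type*} [DecidableEq α] (k : ℕ) (g : ℕ → ℝ) (hg : ∀ i, 0 ≤ g i) :
    ∀ (m : ℕ) (A : Finset α) (d : α → ℕ) (h : α → ℝ),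
      (∀ x ∈ A, 1 ≤ d x ∧ d x ≤ m) →
      (∀ x ∈ A, ∀ j, 1 ≤ j → j ≤ d x → h x ≤ g j) →
      (∀ i, (A.filter (fun x => d x ≤ i)).card ≤ k * i) →
      ∑ x ∈ A, h x ≤ k * ∑ i ∈ Finset.range m, g (i + 1) := by
  intro m
  induction m with
  | zero =>
    intro A d h hd _ _
    have hA : A = ∅ := Finset.eq_empty_of_forall_notMem (fun x hx => by
      have := hd x hx; omega)
    simp [hA]
  | succ m ih =>
    intro A d h hd hhg hcount
    have hAcard : A.card ≤ k * (m + 1) := by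
      have h1 := hcount (m + 1)
      rwa [Finset.filter_true_of_mem (fun x hx => (hd x hx).2)] at h1
    have hkm : k * (m + 1) = k * m + k := by ring
    set F := A.filter (fun x => ¬ d x ≤ m) with hF
    have hFcard : A.card - k * m ≤ F.card := by
      have h1 : (A.filter (fun x => d x ≤ m)).card ≤ k * m := hcount m
      have h2 : (A.filter (fun x => d x ≤ m)).card + F.card = A.card := by
        rw [hF]
        exact Finset.card_filter_add_card_filter_not (s := A) (p := fun x => d x ≤ m)
      omega
    obtain ⟨T, hTF, hTcard⟩ := Finset.exists_subset_card_eq hFcard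
    have hTA : T ⊆ A := hTF.trans (Finset.filter_subset _ A)
    have hA'card : (A \ T).card ≤ k * m := by
      rw [Finset.card_sdiff_of_subset hTA]
      omega
    have hTk : T.card ≤ k := by omega
    -- apply IH to A \ T with deadlines capped at m
    have hstep : ∑ x ∈ A \ T, h x ≤ k * ∑ i ∈ Finset.range m, g (i + 1) := by
      apply ih (A \ T) (fun x => min (d x) m) h
      · intro x hx
        have hxA : x ∈ A := (Finset.mem_sdiff.mp hx).1
        have h1 := hd x hxA
        have hm1 : 1 ≤ m := by
          by_contra hm
          have : m = 0 := by omega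
          subst this
          have : 0 < (A \ T).card := Finset.card_pos.mpr ⟨x, hx⟩
          omega
        constructor <;> omega
      · intro x hx j hj1 hj2
        exact hhg x (Finset.mem_sdiff.mp hx).1 j hj1 (le_trans hj2 (min_le_left _ _))
      · intro i
        by_cases him : m ≤ i
        · calc ((A \ T).filter (fun x => min (d x) m ≤ i)).card
              ≤ (A \ T).card := Finset.card_le_card (Finset.filter_subset _ _)
            _ ≤ k * m := hA'card
            _ ≤ k * i := Nat.mul_le_mul_left k him
        · have hsub' : (A \ T).filter (fun x => min (d x) m ≤ i) ⊆
              A.filter (fun x => d x ≤ i) := by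
            intro x hx
            rw [Finset.mem_filter] at hx ⊢
            refine ⟨(Finset.mem_sdiff.mp hx.1).1, ?_⟩
            have := hx.2
            omega
          exact le_trans (Finset.card_le_card hsub') (hcount i)
    have hTsum : ∑ x ∈ T, h x ≤ (k : ℝ) * g (m + 1) := by
      calc ∑ x ∈ T, h x ≤ ∑ _x ∈ T, g (m + 1) := by
            apply Finset.sum_le_sum
            intro x hx
            have hxF := hTF hx
            rw [hF, Finset.mem_filter] at hxF
            exact hhg x hxF.1 (m + 1) (by omega) (by omega)
        _ = (T.card : ℝ) * g (m + 1) := by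
            rw [Finset.sum_const, nsmul_eq_mul]
        _ ≤ (k : ℝ) * g (m + 1) := by
            apply mul_le_mul_of_nonneg_right _ (hg (m + 1))
            exact_mod_cast hTk
    have hsplit : ∑ x ∈ A \ T, h x + ∑ x ∈ T, h x = ∑ x ∈ A, h x :=
      Finset.sum_sdiff hTA
    rw [Finset.sum_range_succ]
    linarith

/-- Approximate greedy on a `k`-system.  The greedy procedure produces
`S = {e₀, …, e_{m-1}}` (in this order, stopping when no element can be added),
and at each step `i` every feasible candidate `x` satisfies
`Δf(x | Sᵢ) ≤ Δf(eᵢ | Sᵢ) + 2βσᵢ`.  Then for every feasible `C`,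
`f(S) + (2k/(k+1))·β·Σᵢ σᵢ ≥ f(S ∪ C)/(k+1)`. -/
theorem stmt7 {α : Type*} [DecidableEq α] (k : ℕ) (I : Finset α → Prop)
    (hI : IsKSystem k I)
    (f : Finset α → ℝ) (hnn : ∀ S : Finset α, 0 ≤ f S)
    (hmono : ∀ A B : Finset α, A ⊆ B → f A ≤ f B) (hsub : Submodular f)
    (m : ℕ) (e : ℕ → α) (hinj : ∀ i < m, ∀ j < m, e i = e j → i = j)
    (β : ℝ) (hβ : 0 ≤ β) (σ : ℕ → ℝ) (hσ : ∀ i, 0 ≤ σ i)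
    (hSfeas : I ((Finset.range m).image e))
    (hstop : ∀ x : α, x ∉ (Finset.range m).image e →
      ¬ I (insert x ((Finset.range m).image e)))
    (hgreedy : ∀ i < m, ∀ x : α, I (insert x ((Finset.range i).image e)) →
      f (insert x ((Finset.range i).image e)) - f ((Finset.range i).image e) ≤
      f (insert (e i) ((Finset.range i).image e)) - f ((Finset.range i).image e)
        + 2 * β * σ i)
    (C : Finset α) (hC : I C) :
    f ((Finset.range m).image e ∪ C) / ((k : ℝ) + 1) ≤
      f ((Finset.range m).image e) +
        (2 * (k : ℝ) / ((k : ℝ) + 1)) * β * ∑ i ∈ Finset.range m, σ i := by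
  classical
  obtain ⟨hIempty, hdown, hksys⟩ := hI
  -- the greedy prefix sets
  let S : ℕ → Finset α := fun i => (Finset.range i).image e
  have hSsucc : ∀ i, S (i + 1) = insert (e i) (S i) := by
    intro i
    show (Finset.range (i + 1)).image e = insert (e i) ((Finset.range i).image e)
    rw [Finset.range_add_one, Finset.image_insert]
  have hS0 : S 0 = ∅ := by simp [S]
  have hSmono : ∀ i j, i ≤ j → S i ⊆ S j := fun i j hij =>
    Finset.image_subset_image (Finset.range_subset_range.mpr hij)
  have hSI : ∀ i, i ≤ m → I (S i) := fun i hi => hdown _ _ (hSmono i m hi) hSfeas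
  have hScard : ∀ i, i ≤ m → (S i).card = i := by
    intro i hi
    show ((Finset.range i).image e).card = i
    rw [Finset.card_image_of_injOn, Finset.card_range]
    intro a ha b hb hab
    simp only [Finset.coe_range, Set.mem_Iio] at ha hb
    exact hinj a (lt_of_lt_of_le ha hi) b (lt_of_lt_of_le hb hi) hab
  -- per-step gains
  let g : ℕ → ℝ := fun j => (f (S j) - f (S (j - 1))) + 2 * β * σ (j - 1)
  have hgnn : ∀ j, 0 ≤ g j := by
    intro j
    have h1 : f (S (j - 1)) ≤ f (S j) := hmono _ _ (hSmono _ _ (by omega))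
    have h2 : 0 ≤ 2 * β * σ (j - 1) := mul_nonneg (by linarith) (hσ _)
    simp only [g]
    linarith
  -- the deadline function on A = C \ S m
  let A : Finset α := C \ S m
  let d : α → ℕ := fun x => sInf {i | ¬ I (insert x (S i))}
  have hAC : A ⊆ C := Finset.sdiff_subset
  have hAS : ∀ x ∈ A, x ∉ S m := fun x hx => (Finset.mem_sdiff.mp hx).2
  have hdne : ∀ x ∈ A, {i | ¬ I (insert x (S i))}.Nonempty :=
    fun x hx => ⟨m, hstop x (hAS x hx)⟩
  have hdm : ∀ x ∈ A, d x ≤ m := fun x hx => Nat.sInf_le (hstop x (hAS x hx))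
  have hdfeas : ∀ x ∈ A, ∀ j, j < d x → I (insert x (S j)) := by
    intro x hx j hj
    by_contra hni
    have hle : d x ≤ j := Nat.sInf_le hni
    omega
  have hd1 : ∀ x ∈ A, 1 ≤ d x := by
    intro x hx
    by_contra hlt
    have h0 : d x = 0 := by omega
    have hmem : ¬ I (insert x (S (d x))) := Nat.sInf_mem (hdne x hx)
    rw [h0, hS0] at hmem
    exact hmem (hdown _ C (Finset.singleton_subset_iff.mpr (hAC hx)) hC)
  have hdead : ∀ x ∈ A, ∀ i, d x ≤ i → ¬ I (insert x (S i)) := by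
    intro x hx i hi hIi
    exact Nat.sInf_mem (hdne x hx)
      (hdown _ _ (Finset.insert_subset_insert x (hSmono _ _ hi)) hIi)
  -- the marginal value at the end
  let h : α → ℝ := fun x => f (insert x (S m)) - f (S m)
  have hhb : ∀ x ∈ A, ∀ j, 1 ≤ j → j ≤ d x → h x ≤ g j := by
    intro x hx j hj1 hjd
    have hjm : j - 1 < m := by have := hdm x hx; omega
    have hfeas : I (insert x (S (j - 1))) := hdfeas x hx (j - 1) (by omega)
    have hgr := hgreedy (j - 1) hjm x hfeas
    have hj' : j - 1 + 1 = j := by omega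
    have hstep : f (insert (e (j - 1)) (S (j - 1))) = f (S j) := by
      rw [← hSsucc (j - 1), hj']
    have hsubm : f (insert x (S m)) - f (S m) ≤
        f (insert x (S (j - 1))) - f (S (j - 1)) :=
      hsub _ _ (hSmono _ _ (by omega)) x (hAS x hx)
    show f (insert x (S m)) - f (S m) ≤ (f (S j) - f (S (j - 1))) + 2 * β * σ (j - 1)
    rw [← hstep]
    calc f (insert x (S m)) - f (S m)
        ≤ f (insert x (S (j - 1))) - f (S (j - 1)) := hsubm
      _ ≤ f (insert (e (j - 1)) (S (j - 1))) - f (S (j - 1)) + 2 * β * σ (j - 1) := hgr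
      _ = (f (insert (e (j - 1)) (S (j - 1))) - f (S (j - 1))) + 2 * β * σ (j - 1) := by
          ring
  -- the counting condition
  have hcount : ∀ i, (A.filter (fun x => d x ≤ i)).card ≤ k * i := by
    intro i
    set i' := min i m with hi'
    set K := A.filter (fun x => ¬ I (insert x (S i'))) with hK
    have hsubset : A.filter (fun x => d x ≤ i) ⊆ K := by
      intro x hx
      rw [Finset.mem_filter] at hx ⊢
      exact ⟨hx.1, hdead x hx.1 i' (le_min hx.2 (hdm x hx.1))⟩
    have hKI : I K := hdown _ C ((Finset.filter_subset _ A).trans hAC) hC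
    have hU : MaximalIn I (S i' ∪ K) (S i') := by
      refine ⟨Finset.subset_union_left, hSI i' (min_le_right i m), ?_⟩
      intro x hxU hxS
      rcases Finset.mem_union.mp hxU with hx | hx
      · exact absurd hx hxS
      · exact (Finset.mem_filter.mp hx).2
    obtain ⟨B, hKB, hBmax⟩ := stmt7_extend I ((S i' ∪ K) \ K).card (S i' ∪ K) K
      le_rfl Finset.subset_union_right hKI
    have hBcard : B.card ≤ k * (S i').card := hksys (S i' ∪ K) B (S i') hBmax hU
    have hKcard : K.card ≤ k * i' := by
      rw [hScard i' (min_le_right i m)] at hBcard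
      exact le_trans (Finset.card_le_card hKB) hBcard
    calc (A.filter (fun x => d x ≤ i)).card
        ≤ K.card := Finset.card_le_card hsubset
      _ ≤ k * i' := hKcard
      _ ≤ k * i := Nat.mul_le_mul_left k (min_le_left i m)
  -- assemble
  have hsum1 : ∑ x ∈ A, h x ≤ k * ∑ i ∈ Finset.range m, g (i + 1) :=
    stmt7_sched k g hgnn m A d h (fun x hx => ⟨hd1 x hx, hdm x hx⟩) hhb hcount
  have hsum2 : ∑ i ∈ Finset.range m, g (i + 1) =
      (f (S m) - f (S 0)) + 2 * β * ∑ i ∈ Finset.range m, σ i := by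
    have : ∀ i, g (i + 1) = (f (S (i + 1)) - f (S i)) + 2 * β * σ i := by
      intro i; simp [g]
    simp only [this]
    rw [Finset.sum_add_distrib, Finset.sum_range_sub (fun i => f (S i)), ← Finset.mul_sum]
  have hmarg : f (S m ∪ C) ≤ f (S m) + ∑ x ∈ A, h x := stmt7_marg f hsub C (S m)
  have hfe : 0 ≤ f (S 0) := hnn _
  have hknn : (0 : ℝ) ≤ (k : ℝ) := Nat.cast_nonneg k
  have hk1 : (0 : ℝ) < (k : ℝ) + 1 := by positivity
  rw [div_le_iff₀ hk1]
  have hsσ : 0 ≤ ∑ i ∈ Finset.range m, σ i := Finset.sum_nonneg fun i _ => hσ i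
  have key : f (S m ∪ C) ≤ ((k : ℝ) + 1) * f (S m) +
      2 * (k : ℝ) * β * ∑ i ∈ Finset.range m, σ i := by
    rw [hsum2] at hsum1
    nlinarith [mul_nonneg hknn hfe]
  have hrw : (f ((Finset.range m).image e) +
      2 * (k : ℝ) / ((k : ℝ) + 1) * β * ∑ i ∈ Finset.range m, σ i) * ((k : ℝ) + 1) =
      ((k : ℝ) + 1) * f (S m) + 2 * (k : ℝ) * β * ∑ i ∈ Finset.range m, σ i := by
    field_simp
    ring
  rw [hrw]
  exact key
end

section
/- (Exact greedy on a k-system.) Let f be a non-negative monotone submodular function on 2^N and (N, I) a k-system. If S is the output of the greedy algorithm that repeatedly adds the element with the largest marginal gain among those keeping the set in I (stopping when none exists), then for every C ∈ I: (k+1)·f(S) ≥ f(S ∪ C), and hence f(S) ≥ f(C)/(k+1). -/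
lemma aux_exists_maximal {α : Type*} [DecidableEq α] {I : Finset α → Prop}
    (G A : Finset α) (hAG : A ⊆ G) (hA : I A) :
    ∃ B, A ⊆ B ∧ MaximalIn I G B := by
  classical
  obtain ⟨B, hBmem, hBmax⟩ :=
    Finset.exists_max_image ((G.powerset).filter fun D => A ⊆ D ∧ I D)
      Finset.card ⟨A, by simp [hAG, hA]⟩
  simp only [Finset.mem_filter, Finset.mem_powerset] at hBmem
  refine ⟨B, hBmem.2.1, hBmem.1, hBmem.2.2, ?_⟩
  intro x hxG hxB hIx
  have hmem : insert x B ∈ (G.powerset).filter fun D => A ⊆ D ∧ I D := by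
    simp only [Finset.mem_filter, Finset.mem_powerset]
    exact ⟨Finset.insert_subset hxG hBmem.1,
      hBmem.2.1.trans (Finset.subset_insert _ _), hIx⟩
  have h := hBmax _ hmem
  rw [Finset.card_insert_of_notMem hxB] at h
  omega

lemma aux_expand {α : Type*} [DecidableEq α] (f : Finset α → ℝ)
    (hsub : Submodular f) (A B : Finset α) :
    f (A ∪ B) ≤ f A + ∑ c ∈ B \ A, (f (insert c A) - f A) := by
  classical
  induction B using Finset.induction_on with
  | empty => simp
  | @insert x B hx ih =>
    by_cases hxA : x ∈ A
    · rw [Finset.union_insert, Finset.insert_eq_self.mpr (Finset.mem_union_left _ hxA),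
        Finset.insert_sdiff_of_mem _ hxA]
      exact ih
    · have hxAB : x ∉ A ∪ B := by simp [hxA, hx]
      rw [Finset.union_insert,
        Finset.insert_sdiff_of_notMem _ hxA,
        Finset.sum_insert (by simp [hx, hxA])]
      have h1 := hsub A (A ∪ B) Finset.subset_union_left x hxAB
      linarith

lemma aux_abel (m : ℕ) (k : ℝ) (g n : ℕ → ℝ)
    (hglast : 0 ≤ g (m - 1))
    (hgmono : ∀ i, i + 1 < m → g (i + 1) ≤ g i)
    (hN : ∀ j, j ≤ m → ∑ i ∈ Finset.range j, n i ≤ k * j) :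
    ∑ i ∈ Finset.range m, g i * n i ≤ k * ∑ i ∈ Finset.range m, g i := by
  have h1 := Finset.sum_range_by_parts g n m
  have h2 := Finset.sum_range_by_parts g (fun _ => k) m
  simp only [smul_eq_mul, Finset.sum_const, Finset.card_range, nsmul_eq_mul] at h1 h2
  have hrhs : k * ∑ i ∈ Finset.range m, g i = ∑ i ∈ Finset.range m, g i * k := by
    rw [← Finset.sum_mul, mul_comm]
  rw [h1, hrhs, h2]
  have hfirst : g (m - 1) * ∑ i ∈ Finset.range m, n i ≤ g (m - 1) * ((m : ℝ) * k) := by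
    apply mul_le_mul_of_nonneg_left _ hglast
    rw [mul_comm]
    exact hN m le_rfl
  have hsecond : ∑ i ∈ Finset.range (m - 1), (g (i + 1) - g i) * ((i + 1 : ℕ) * k)
      ≤ ∑ i ∈ Finset.range (m - 1), (g (i + 1) - g i) * ∑ j ∈ Finset.range (i + 1), n j := by
    apply Finset.sum_le_sum
    intro i hi
    have him : i < m - 1 := Finset.mem_range.mp hi
    have hc : g (i + 1) - g i ≤ 0 := sub_nonpos.mpr (hgmono i (by omega))
    have hNi : ∑ j ∈ Finset.range (i + 1), n j ≤ ((i + 1 : ℕ) : ℝ) * k := by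
      rw [mul_comm]
      exact_mod_cast hN (i + 1) (by omega)
    exact mul_le_mul_of_nonpos_left hNi hc
  push_cast at hsecond ⊢
  linarith


/-- Exact greedy on a `k`-system: the output `S` of the greedy algorithm
(adding at each step the element with the largest marginal gain among those
keeping the set independent, stopping when none exists) satisfies
`(k+1)·f(S) ≥ f(S ∪ C)` and hence `f(S) ≥ f(C)/(k+1)` for every `C ∈ I`. -/
theorem stmt8 {α : Type*} [DecidableEq α] (k : ℕ) (I : Finset α → Prop)
    (hI : IsKSystem k I)
    (f : Finset α → ℝ) (hnn : ∀ S : Finset α, 0 ≤ f S)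
    (hmono : ∀ A B : Finset α, A ⊆ B → f A ≤ f B) (hsub : Submodular f)
    (m : ℕ) (e : ℕ → α) (hinj : ∀ i < m, ∀ j < m, e i = e j → i = j)
    (hSfeas : I ((Finset.range m).image e))
    (hstop : ∀ x : α, x ∉ (Finset.range m).image e →
      ¬ I (insert x ((Finset.range m).image e)))
    (hgreedy : ∀ i < m, ∀ x : α, I (insert x ((Finset.range i).image e)) →
      f (insert x ((Finset.range i).image e)) - f ((Finset.range i).image e) ≤
      f (insert (e i) ((Finset.range i).image e)) - f ((Finset.range i).image e))
    (C : Finset α) (hC : I C) :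
    f ((Finset.range m).image e ∪ C) ≤ ((k : ℝ) + 1) * f ((Finset.range m).image e) ∧
    f C / ((k : ℝ) + 1) ≤ f ((Finset.range m).image e) := by
  classical
  obtain ⟨hIempty, hdown, hksys⟩ := hI
  set S : ℕ → Finset α := fun i => (Finset.range i).image e with hSdef
  have hkpos : (0 : ℝ) < (k : ℝ) + 1 := by positivity
  -- basic facts about S
  have hSsub : ∀ i j : ℕ, i ≤ j → S i ⊆ S j := fun i j h =>
    Finset.image_subset_image (Finset.range_subset_range.mpr h)
  have hSsucc : ∀ i : ℕ, S (i + 1) = insert (e i) (S i) := by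
    intro i
    simp [hSdef, Finset.range_add_one]
  have hS0 : S 0 = ∅ := by simp [hSdef]
  have hcard : ∀ j : ℕ, j ≤ m → (S j).card = j := by
    intro j hj
    rw [hSdef]
    rw [Finset.card_image_of_injOn, Finset.card_range]
    intro a ha b hb hab
    exact hinj a (lt_of_lt_of_le (Finset.mem_range.mp ha) hj)
      b (lt_of_lt_of_le (Finset.mem_range.mp hb) hj) hab
  have hnm : ∀ i : ℕ, i < m → e i ∉ S i := by
    intro i hi hmem
    obtain ⟨j, hj, hji⟩ := Finset.mem_image.mp hmem
    have hjm : j < i := Finset.mem_range.mp hj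
    have := hinj j (by omega) i hi hji
    omega
  have hIS : ∀ j : ℕ, j ≤ m → I (S j) := fun j hj => hdown _ _ (hSsub j m hj) hSfeas
  -- m = 0 case
  rcases Nat.eq_zero_or_pos m with hm0 | hm
  · subst hm0
    have hCempty : C = ∅ := by
      by_contra h
      obtain ⟨c, hc⟩ := Finset.nonempty_iff_ne_empty.mpr h
      refine hstop c (by simp) ?_
      have : ({c} : Finset α) ⊆ C := Finset.singleton_subset_iff.mpr hc
      have hIc := hdown _ _ this hC
      simpa using hIc
    subst hCempty
    constructor
    · simp only [Finset.range_zero, Finset.image_empty, Finset.union_empty]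
      nlinarith [hnn (∅ : Finset α), Nat.cast_nonneg (α := ℝ) k]
    · simp only [Finset.range_zero, Finset.image_empty]
      exact div_le_self (hnn _) (by nlinarith [Nat.cast_nonneg (α := ℝ) k])
  -- main case
  set g : ℕ → ℝ := fun i => f (S (i + 1)) - f (S i) with hgdef
  have hgnn : ∀ i : ℕ, 0 ≤ g i := fun i =>
    sub_nonneg.mpr (hmono _ _ (hSsub i (i + 1) (Nat.le_succ i)))
  have hgdec : ∀ i, i + 1 < m → g (i + 1) ≤ g i := by
    intro i hi
    have hfeas : I (insert (e (i + 1)) (S i)) := by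
      apply hdown _ (S m) _ hSfeas
      apply Finset.insert_subset
      · exact Finset.mem_image.mpr ⟨i + 1, Finset.mem_range.mpr hi, rfl⟩
      · exact hSsub i m (by omega)
    have h1 := hgreedy i (by omega) (e (i + 1)) hfeas
    have h2 := hsub (S i) (S (i + 1)) (hSsub i (i + 1) (Nat.le_succ i))
      (e (i + 1)) (hnm (i + 1) hi)
    have e1 : g (i + 1) = f (insert (e (i + 1)) (S (i + 1))) - f (S (i + 1)) := by
      rw [hgdef]; simp only [hSsucc (i + 1)]
    have e2 : g i = f (insert (e i) (S i)) - f (S i) := by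
      rw [hgdef]; simp only [hSsucc i]
    rw [e1, e2]
    calc f (insert (e (i + 1)) (S (i + 1))) - f (S (i + 1))
        ≤ f (insert (e (i + 1)) (S i)) - f (S i) := h2
      _ ≤ f (insert (e i) (S i)) - f (S i) := h1
  -- the death time b c
  set b : α → ℕ := fun c =>
    if h : ∃ i, ¬ I (insert c (S i)) then Nat.find h else 0 with hbdef
  have hbfacts : ∀ c ∈ C \ S m,
      1 ≤ b c ∧ b c ≤ m ∧ ¬ I (insert c (S (b c))) ∧ I (insert c (S (b c - 1))) := by
    intro c hc
    obtain ⟨hcC, hcS⟩ := Finset.mem_sdiff.mp hc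
    have hex : ∃ i, ¬ I (insert c (S i)) := ⟨m, hstop c hcS⟩
    have hbeq : b c = Nat.find hex := dif_pos hex
    have hspec : ¬ I (insert c (S (b c))) := by rw [hbeq]; exact Nat.find_spec hex
    have hle : b c ≤ m := by rw [hbeq]; exact Nat.find_le (hstop c hcS)
    have h1 : 1 ≤ b c := by
      rcases Nat.eq_zero_or_pos (b c) with h0 | h; swap
      · exact h
      · exfalso
        apply hspec
        rw [h0, hS0]
        exact hdown _ _ (by simp [Finset.insert_subset_iff, hcC]) hC
    refine ⟨h1, hle, hspec, ?_⟩
    have hlt : b c - 1 < Nat.find hex := by omega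
    have := Nat.find_min hex hlt
    exact not_not.mp this
  -- per element marginal bound
  have hstep : ∀ c ∈ C \ S m,
      f (insert c (S m)) - f (S m) ≤ g (b c - 1) := by
    intro c hc
    obtain ⟨hb1, hbm, _, hbfeas⟩ := hbfacts c hc
    obtain ⟨hcC, hcS⟩ := Finset.mem_sdiff.mp hc
    have h1 := hsub (S (b c - 1)) (S m) (hSsub _ _ (by omega)) c hcS
    have h2 := hgreedy (b c - 1) (by omega) c hbfeas
    have e2 : g (b c - 1) = f (insert (e (b c - 1)) (S (b c - 1))) - f (S (b c - 1)) := by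
      rw [hgdef]; simp only [hSsucc]
    rw [e2]
    exact h1.trans h2
  -- counting
  have hcount : ∀ j : ℕ, j ≤ m →
      ((C \ S m).filter fun c => b c - 1 < j).card ≤ k * j := by
    intro j hj
    set D := (C \ S m).filter fun c => b c - 1 < j with hDdef
    have hDC : D ⊆ C := (Finset.filter_subset _ _).trans Finset.sdiff_subset
    have hID : I D := hdown _ _ hDC hC
    obtain ⟨B, hDB, hBmax⟩ := aux_exists_maximal (I := I) (S j ∪ D) D
      Finset.subset_union_right hID
    have hSmax : MaximalIn I (S j ∪ D) (S j) := by
      refine ⟨Finset.subset_union_left, hIS j hj, ?_⟩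
      intro x hx hxS hIx
      have hxD : x ∈ D := by
        rcases Finset.mem_union.mp hx with h | h
        · exact absurd h hxS
        · exact h
      obtain ⟨hxCS, hxlt⟩ := Finset.mem_filter.mp hxD
      obtain ⟨hb1, hbm, hbspec, _⟩ := hbfacts x hxCS
      apply hbspec
      exact hdown _ _ (Finset.insert_subset_insert _ (hSsub _ _ (by omega))) hIx
    have hBcard := hksys (S j ∪ D) B (S j) hBmax hSmax
    rw [hcard j hj] at hBcard
    calc D.card ≤ B.card := Finset.card_le_card hDB
      _ ≤ k * j := hBcard
  -- fiber counts
  set n : ℕ → ℝ := fun i => (((C \ S m).filter fun c => b c - 1 = i).card : ℝ) with hndef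
  have hpartial : ∀ j : ℕ, j ≤ m → ∑ i ∈ Finset.range j, n i
      = (((C \ S m).filter fun c => b c - 1 < j).card : ℝ) := by
    intro j hj
    rw [hndef]
    push_cast
    rw [← Nat.cast_sum]
    congr 1
    have hkey : ((C \ S m).filter fun c => b c - 1 < j).card
        = ∑ i ∈ Finset.range j, (((C \ S m).filter fun c => b c - 1 < j).filter
            fun c => b c - 1 = i).card := by
      apply Finset.card_eq_sum_card_fiberwise
      intro x hx
      exact Finset.mem_range.mpr (Finset.mem_filter.mp hx).2
    rw [hkey]
    apply Finset.sum_congr rfl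
    intro i hi
    have hij : i < j := Finset.mem_range.mp hi
    rw [Finset.filter_filter]
    congr 1
    apply Finset.filter_congr
    intro c _
    constructor
    · exact fun h => ⟨by omega, h⟩
    · exact fun h => h.2
  have hN : ∀ j : ℕ, j ≤ m → ∑ i ∈ Finset.range j, n i ≤ (k : ℝ) * j := by
    intro j hj
    rw [hpartial j hj]
    exact_mod_cast hcount j hj
  -- fiberwise sum
  have hfib : ∑ c ∈ C \ S m, g (b c - 1) = ∑ i ∈ Finset.range m, g i * n i := by
    rw [← Finset.sum_fiberwise_of_maps_to (g := fun c => b c - 1) (t := Finset.range m)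
      (fun c hc => by
        obtain ⟨hb1, hbm, _, _⟩ := hbfacts c hc
        refine Finset.mem_range.mpr ?_
        show b c - 1 < m
        omega) (fun c => g (b c - 1))]
    apply Finset.sum_congr rfl
    intro i _
    rw [hndef]
    have : ∀ c ∈ (C \ S m).filter fun c => b c - 1 = i, g (b c - 1) = g i := by
      intro c hc
      rw [(Finset.mem_filter.mp hc).2]
    rw [Finset.sum_congr rfl this, Finset.sum_const, nsmul_eq_mul, mul_comm]
  -- Abel
  have habel := aux_abel m (k : ℝ) g n (hgnn (m - 1)) hgdec hN
  -- telescope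
  have htel : ∑ i ∈ Finset.range m, g i = f (S m) - f (S 0) :=
    Finset.sum_range_sub (fun i => f (S i)) m
  -- assemble
  have hexp := aux_expand f hsub (S m) C
  have hsum1 : ∑ c ∈ C \ S m, (f (insert c (S m)) - f (S m))
      ≤ ∑ c ∈ C \ S m, g (b c - 1) := Finset.sum_le_sum hstep
  have hfe : 0 ≤ (k : ℝ) * f (S 0) := mul_nonneg (Nat.cast_nonneg k) (hnn _)
  have hmain : f (S m ∪ C) ≤ ((k : ℝ) + 1) * f (S m) := by
    have h2 : f (S m) + ∑ c ∈ C \ S m, (f (insert c (S m)) - f (S m))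
        ≤ f (S m) + (k : ℝ) * (f (S m) - f (S 0)) := by
      have hk' : (k : ℝ) * ∑ i ∈ Finset.range m, g i = (k : ℝ) * (f (S m) - f (S 0)) := by
        rw [htel]
      linarith [hsum1, hfib, habel, hk']
    nlinarith [hexp.trans h2, hnn (S 0), Nat.cast_nonneg (α := ℝ) k]
  refine ⟨hmain, ?_⟩
  rw [div_le_iff₀ hkpos]
  have hfC : f C ≤ f (S m ∪ C) := hmono _ _ Finset.subset_union_right
  nlinarith [hfC, hmain]
end

section
/- (Case-one threshold bound.) Suppose f is non-negative monotone submodular, costs c_j : N → (0,1] for j = 1..l with c(e) := Σ_j c_j(e), and S = {e₁,…,e_m} satisfies Δf(eᵢ | S_{i−1}) + 2βσᵢ ≥ ρ·c(eᵢ) for every i, and there is e' ∉ S with f(S) + 2βΣᵢσᵢ ≥ ρ·c(e') such that S + e' violates some knapsack constraint (c_j(S) + c_j(e') > 1 for some j). Then f(S) + 2βΣᵢ σᵢ ≥ ρ/2. -/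
/-- Case-one threshold bound: if every selected element `eᵢ` satisfies
`Δf(eᵢ|Sᵢ) + 2βσᵢ ≥ ρ·c(eᵢ)` and there is `e' ∉ S` with
`f(S) + 2βΣσ ≥ ρ·c(e')` such that `S + e'` violates a knapsack constraint,
then `f(S) + 2βΣσ ≥ ρ/2`. -/
theorem stmt9 {α : Type*} [DecidableEq α] (l : ℕ) (cj : Fin l → α → ℝ)
    (hcj : ∀ j x, 0 < cj j x ∧ cj j x ≤ 1)
    (f : Finset α → ℝ) (hnn : ∀ S : Finset α, 0 ≤ f S)
    (hmono : ∀ A B : Finset α, A ⊆ B → f A ≤ f B) (hsub : Submodular f)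
    (m : ℕ) (e : ℕ → α) (hinj : ∀ i < m, ∀ j < m, e i = e j → i = j)
    (ρ β : ℝ) (hρ : 0 < ρ) (hβ : 0 ≤ β) (σ : ℕ → ℝ) (hσ : ∀ i, 0 ≤ σ i)
    (hstep : ∀ i < m, ρ * (∑ j, cj j (e i)) ≤
      f (insert (e i) ((Finset.range i).image e)) - f ((Finset.range i).image e)
        + 2 * β * σ i)
    (e' : α) (he' : e' ∉ (Finset.range m).image e)
    (hucb : ρ * (∑ j, cj j e') ≤
      f ((Finset.range m).image e) + 2 * β * ∑ i ∈ Finset.range m, σ i)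
    (hviol : ∃ j, 1 < (∑ x ∈ (Finset.range m).image e, cj j x) + cj j e') :
    ρ / 2 ≤ f ((Finset.range m).image e) + 2 * β * ∑ i ∈ Finset.range m, σ i := by
  obtain ⟨j0, hj0⟩ := hviol
  set S := (Finset.range m).image e with hS
  set T := f S + 2 * β * ∑ i ∈ Finset.range m, σ i with hT
  -- single cost bounded by total cost
  have hsingle : ∀ x : α, cj j0 x ≤ ∑ j, cj j x := fun x =>
    Finset.single_le_sum (fun j _ => (hcj j x).1.le) (Finset.mem_univ j0)
  -- claim B : ρ * cj j0 e' ≤ T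
  have hB : ρ * cj j0 e' ≤ T := le_trans
    (mul_le_mul_of_nonneg_left (hsingle e') hρ.le) hucb
  -- telescoping bound
  have htel : ∑ i ∈ Finset.range m,
      (f (insert (e i) ((Finset.range i).image e)) - f ((Finset.range i).image e))
      = f S - f ∅ := by
    have : ∀ i, insert (e i) ((Finset.range i).image e)
        = (Finset.range (i+1)).image e := by
      intro i
      rw [Finset.range_add_one, Finset.image_insert]
    calc ∑ i ∈ Finset.range m,
        (f (insert (e i) ((Finset.range i).image e)) - f ((Finset.range i).image e))
        = ∑ i ∈ Finset.range m,
          (f ((Finset.range (i+1)).image e) - f ((Finset.range i).image e)) := by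
          simp_rw [this]
      _ = f ((Finset.range m).image e) - f ((Finset.range 0).image e) :=
          Finset.sum_range_sub (fun i => f ((Finset.range i).image e)) m
      _ = f S - f ∅ := by simp [hS]
  have hA : ρ * ∑ x ∈ S, cj j0 x ≤ T := by
    have h1 : ∑ x ∈ S, cj j0 x = ∑ i ∈ Finset.range m, cj j0 (e i) := by
      rw [hS]
      exact Finset.sum_image (fun x hx y hy hxy =>
        hinj x (Finset.mem_range.mp hx) y (Finset.mem_range.mp hy) hxy)
    rw [h1, Finset.mul_sum]
    calc ∑ i ∈ Finset.range m, ρ * cj j0 (e i)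
        ≤ ∑ i ∈ Finset.range m, ρ * (∑ j, cj j (e i)) :=
          Finset.sum_le_sum (fun i _ =>
            mul_le_mul_of_nonneg_left (hsingle (e i)) hρ.le)
      _ ≤ ∑ i ∈ Finset.range m,
          (f (insert (e i) ((Finset.range i).image e)) - f ((Finset.range i).image e)
            + 2 * β * σ i) :=
          Finset.sum_le_sum (fun i hi => hstep i (Finset.mem_range.mp hi))
      _ = (f S - f ∅) + 2 * β * ∑ i ∈ Finset.range m, σ i := by
          rw [Finset.sum_add_distrib, htel, Finset.mul_sum]
      _ ≤ T := by
          have := hnn ∅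
          rw [hT]; linarith
  nlinarith [hj0, hA, hB, hρ]
end
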